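/- There exist two simple graphs on vertex set Fin 9 that are not isomorphic but have the same bivariate permanent polynomial. -/

import Mathlib

open scoped Classical

/-- The permanent of a square matrix: `per(M) = ∑_σ ∏_i M i (σ i)`. -/
noncomputable def permanent {n : Type*} [DecidableEq n] [Fintype n] {R : Type*} [CommRing R]
    (M : Matrix n n R) : R :=
  ∑ σ : Equiv.Perm n, ∏ i, M i (σ i)

/-- The bivariate permanent polynomial of a simple graph `G` on `Fin n`:
`P(G; x, λ) = per(x • Iₙ + λ • A(G) + A(Ḡ))`, as an element of `ℤ[x, λ]`
(realized as `MvPolynomial (Fin 2) ℤ`, with `X 0 = x` and `X 1 = λ`). -/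
noncomputable def bivPermPoly {n : ℕ} (G : SimpleGraph (Fin n)) : MvPolynomial (Fin 2) ℤ :=
  permanent
    ((MvPolynomial.X 0 : MvPolynomial (Fin 2) ℤ) • (1 : Matrix (Fin n) (Fin n) (MvPolynomial (Fin 2) ℤ))
      + (MvPolynomial.X 1 : MvPolynomial (Fin 2) ℤ) • G.adjMatrix (MvPolynomial (Fin 2) ℤ)
      + Gᶜ.adjMatrix (MvPolynomial (Fin 2) ℤ))

/-! ### Ryser's formula for the permanent -/

lemma claimA {n : ℕ} (T : Finset (Fin n)) :
    ∑ S : Finset (Fin n), (if T ⊆ S then (-1 : ℤ) ^ (n - S.card) else 0)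
      = if T = Finset.univ then 1 else 0 := by
  have hinv : Function.Involutive (fun S : Finset (Fin n) => Sᶜ) := fun S => compl_compl S
  have h2 : ∀ S : Finset (Fin n), n - Sᶜ.card = S.card := by
    intro S
    have h3 : S.card ≤ n := by
      have := Finset.card_le_univ S
      simpa using this
    rw [Finset.card_compl, Fintype.card_fin]
    omega
  calc ∑ S : Finset (Fin n), (if T ⊆ S then (-1 : ℤ) ^ (n - S.card) else 0)
      = ∑ S : Finset (Fin n), (if T ⊆ (hinv.toPerm _) S then (-1 : ℤ) ^ (n - ((hinv.toPerm _) S).card) else 0) :=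
        (Equiv.sum_comp (hinv.toPerm _) (fun S => if T ⊆ S then (-1 : ℤ) ^ (n - S.card) else 0)).symm
    _ = ∑ S : Finset (Fin n), (if S ⊆ Tᶜ then (-1 : ℤ) ^ S.card else 0) := by
        refine Finset.sum_congr rfl fun S _ => ?_
        have hco : (hinv.toPerm _) S = Sᶜ := rfl
        rw [hco, h2]
        refine if_congr ?_ rfl rfl
        constructor
        · intro h x hx
          simp only [Finset.mem_compl]
          intro hxT
          exact absurd hx (by simpa using h hxT)
        · intro h x hx
          simp only [Finset.mem_compl]
          intro hxS
          exact absurd hx (by simpa using h hxS)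
    _ = ∑ S ∈ Finset.univ.filter (fun S => S ⊆ Tᶜ), (-1 : ℤ) ^ S.card :=
        (Finset.sum_filter _ _).symm
    _ = ∑ S ∈ (Tᶜ).powerset, (-1 : ℤ) ^ S.card := by
        congr 1
        ext S
        simp [Finset.mem_powerset]
    _ = if Tᶜ = ∅ then 1 else 0 := Finset.sum_powerset_neg_one_pow_card
    _ = if T = Finset.univ then 1 else 0 := by
        refine if_congr ?_ rfl rfl
        rw [← Finset.bot_eq_empty, compl_eq_bot, Finset.top_eq_univ]

lemma permanent_ryser {n : ℕ} (M : Matrix (Fin n) (Fin n) ℤ) :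
    permanent M = ∑ S : Finset (Fin n), (-1 : ℤ) ^ (n - S.card) * ∏ i, ∑ j ∈ S, M i j := by
  have step1 : ∀ S : Finset (Fin n), (-1 : ℤ) ^ (n - S.card) * ∏ i, ∑ j ∈ S, M i j
      = ∑ k : Fin n → Fin n,
          (if ∀ i, k i ∈ S then (-1 : ℤ) ^ (n - S.card) * ∏ i, M i (k i) else 0) := by
    intro S
    rw [Finset.prod_univ_sum (f := fun i j => M i j), Finset.mul_sum]
    have hpi : Fintype.piFinset (fun _ : Fin n => S)
        = Finset.univ.filter (fun k : Fin n → Fin n => ∀ i, k i ∈ S) := by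
      ext k
      simp [Fintype.mem_piFinset]
    rw [hpi, Finset.sum_filter]
  have step2 : ∀ k : Fin n → Fin n,
      (∑ S : Finset (Fin n), if ∀ i, k i ∈ S then (-1 : ℤ) ^ (n - S.card) * ∏ i, M i (k i) else 0)
        = (if Finset.image k Finset.univ = Finset.univ then 1 else 0) * ∏ i, M i (k i) := by
    intro k
    calc (∑ S : Finset (Fin n), if ∀ i, k i ∈ S then (-1 : ℤ) ^ (n - S.card) * ∏ i, M i (k i) else 0)
        = ∑ S : Finset (Fin n),
            (if Finset.image k Finset.univ ⊆ S then (-1 : ℤ) ^ (n - S.card) else 0) * ∏ i, M i (k i) := by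
          refine Finset.sum_congr rfl fun S _ => ?_
          rw [ite_mul, zero_mul]
          refine if_congr ?_ rfl rfl
          rw [Finset.image_subset_iff]
          simp
      _ = (∑ S : Finset (Fin n),
            if Finset.image k Finset.univ ⊆ S then (-1 : ℤ) ^ (n - S.card) else 0) * ∏ i, M i (k i) :=
          (Finset.sum_mul _ _ _).symm
      _ = _ := by rw [claimA]
  have himage : Finset.univ.filter (fun k : Fin n → Fin n => Finset.image k Finset.univ = Finset.univ)
      = Finset.univ.image (fun σ : Equiv.Perm (Fin n) => ⇑σ) := by
    ext k
    simp only [Finset.mem_filter, Finset.mem_univ, true_and, Finset.mem_image]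
    constructor
    · intro h
      have hsurj : Function.Surjective k := by
        intro b
        have hb : b ∈ Finset.image k Finset.univ := by rw [h]; exact Finset.mem_univ b
        rcases Finset.mem_image.mp hb with ⟨a, _, ha⟩
        exact ⟨a, ha⟩
      exact ⟨Equiv.ofBijective k hsurj.bijective_of_finite, rfl⟩
    · rintro ⟨σ, rfl⟩
      refine Finset.eq_univ_iff_forall.mpr fun b => ?_
      exact Finset.mem_image.mpr ⟨σ.symm b, Finset.mem_univ _, σ.apply_symm_apply b⟩
  calc permanent M
      = ∑ σ : Equiv.Perm (Fin n), ∏ i, M i (σ i) := rfl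
    _ = ∑ k ∈ Finset.univ.image (fun σ : Equiv.Perm (Fin n) => ⇑σ), ∏ i, M i (k i) := by
        exact (Finset.sum_image (f := fun k : Fin n → Fin n => ∏ i, M i (k i))
          (g := fun σ : Equiv.Perm (Fin n) => ⇑σ)
          (fun a _ b _ h => Equiv.coe_fn_injective h)).symm
    _ = ∑ k ∈ Finset.univ.filter
          (fun k : Fin n → Fin n => Finset.image k Finset.univ = Finset.univ), ∏ i, M i (k i) := by
        rw [himage]
    _ = ∑ k : Fin n → Fin n,
          (if Finset.image k Finset.univ = Finset.univ then 1 else 0) * ∏ i, M i (k i) := by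
        rw [Finset.sum_filter]
        refine Finset.sum_congr rfl fun k _ => ?_
        by_cases h : Finset.image k Finset.univ = Finset.univ <;> simp [h]
    _ = ∑ k : Fin n → Fin n,
          ∑ S : Finset (Fin n), (if ∀ i, k i ∈ S then (-1 : ℤ) ^ (n - S.card) * ∏ i, M i (k i) else 0) := by
        refine Finset.sum_congr rfl fun k _ => (step2 k).symm
    _ = ∑ S : Finset (Fin n),
          ∑ k : Fin n → Fin n, (if ∀ i, k i ∈ S then (-1 : ℤ) ^ (n - S.card) * ∏ i, M i (k i) else 0) :=
        Finset.sum_comm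
    _ = ∑ S : Finset (Fin n), (-1 : ℤ) ^ (n - S.card) * ∏ i, ∑ j ∈ S, M i j := by
        refine Finset.sum_congr rfl fun S _ => (step1 S).symm

/-! ### Digit uniqueness in base B -/

lemma digits_unique (Bv : ℕ) (hB : 0 < Bv) :
    ∀ (n : ℕ) (a b : ℕ → ℕ), (∀ c, c < n → a c < Bv) → (∀ c, c < n → b c < Bv) →
      (∑ c ∈ Finset.range n, a c * Bv ^ c) = (∑ c ∈ Finset.range n, b c * Bv ^ c) →
      ∀ c, c < n → a c = b c := by
  intro n
  induction n with
  | zero => intro a b _ _ _ c hc; omega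
  | succ m ih =>
    intro a b ha hb heq c hc
    rw [Finset.sum_range_succ', Finset.sum_range_succ'] at heq
    have ea : ∀ x : ℕ → ℕ, (∑ i ∈ Finset.range m, x (i + 1) * Bv ^ (i + 1))
        = Bv * ∑ i ∈ Finset.range m, x (i + 1) * Bv ^ i := by
      intro x
      rw [Finset.mul_sum]
      exact Finset.sum_congr rfl fun i _ => by ring
    rw [ea a, ea b, pow_zero, mul_one, mul_one] at heq
    have ha0 : a 0 < Bv := ha 0 (by omega)
    have hb0 : b 0 < Bv := hb 0 (by omega)
    have hma : (Bv * (∑ i ∈ Finset.range m, a (i + 1) * Bv ^ i) + a 0) % Bv = a 0 := by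
      rw [Nat.mul_add_mod, Nat.mod_eq_of_lt ha0]
    have hmb : (Bv * (∑ i ∈ Finset.range m, b (i + 1) * Bv ^ i) + b 0) % Bv = b 0 := by
      rw [Nat.mul_add_mod, Nat.mod_eq_of_lt hb0]
    have h0 : a 0 = b 0 := by rw [← hma, ← hmb, heq]
    have hS : (∑ i ∈ Finset.range m, a (i + 1) * Bv ^ i)
        = ∑ i ∈ Finset.range m, b (i + 1) * Bv ^ i := by
      rw [h0] at heq
      have := Nat.add_right_cancel heq
      exact Nat.eq_of_mul_eq_mul_left hB this
    match c, hc with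
    | 0, _ => exact h0
    | Nat.succ c', hc' =>
      exact ih (fun i => a (i + 1)) (fun i => b (i + 1))
        (fun i hi => ha (i + 1) (by omega)) (fun i hi => hb (i + 1) (by omega)) hS c' (by omega)

/-! ### Fiberwise decomposition of the permutation sum -/

lemma sum_code {Mty : Type*} [AddCommMonoid Mty] (code : Equiv.Perm (Fin 9) → ℕ)
    (hcode : ∀ σ, code σ < 100) (F : ℕ → Mty) :
    (∑ σ : Equiv.Perm (Fin 9), F (code σ))
      = ∑ c ∈ Finset.range 100, (Finset.univ.filter fun σ => code σ = c).card • F c := by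
  have h := Finset.sum_fiberwise_eq_sum_filter' Finset.univ (Finset.range 100) code F
  rw [Finset.filter_true_of_mem (fun σ _ => Finset.mem_range.mpr (hcode σ))] at h
  rw [← h]
  exact Finset.sum_congr rfl fun c _ => by rw [Finset.sum_const]

/-! ### Permanent commutes with ring homomorphisms -/

lemma permanent_map {n : Type*} [DecidableEq n] [Fintype n] {R S : Type*} [CommRing R]
    [CommRing S] (f : R →+* S) (M : Matrix n n R) :
    f (permanent M) = permanent (fun i j => f (M i j)) := by
  unfold permanent
  rw [map_sum]
  exact Finset.sum_congr rfl fun σ _ => map_prod f _ _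

/-! ### Entrywise description and monomial expansion -/

lemma matrix_entry {n : ℕ} (G : SimpleGraph (Fin n)) (i j : Fin n) :
    ((MvPolynomial.X 0 : MvPolynomial (Fin 2) ℤ) • (1 : Matrix (Fin n) (Fin n) (MvPolynomial (Fin 2) ℤ))
      + (MvPolynomial.X 1 : MvPolynomial (Fin 2) ℤ) • G.adjMatrix (MvPolynomial (Fin 2) ℤ)
      + Gᶜ.adjMatrix (MvPolynomial (Fin 2) ℤ)) i j
    = if i = j then MvPolynomial.X 0 else if G.Adj i j then MvPolynomial.X 1 else 1 := by
  by_cases hij : i = j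
  · subst hij
    simp [Matrix.add_apply, Matrix.smul_apply, Matrix.one_apply, smul_eq_mul]
  · by_cases hadj : G.Adj i j
    · simp [Matrix.add_apply, Matrix.smul_apply, Matrix.one_apply, smul_eq_mul, hij, hadj,
        SimpleGraph.compl_adj]
    · simp [Matrix.add_apply, Matrix.smul_apply, Matrix.one_apply, smul_eq_mul, hij, hadj,
        SimpleGraph.compl_adj]

lemma bivPermPoly_eq_sum {n : ℕ} (G : SimpleGraph (Fin n)) :
    bivPermPoly G = ∑ σ : Equiv.Perm (Fin n),
      (MvPolynomial.X 0 : MvPolynomial (Fin 2) ℤ) ^ (Finset.univ.filter fun i => i = σ i).card *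
      (MvPolynomial.X 1 : MvPolynomial (Fin 2) ℤ) ^
        (Finset.univ.filter fun i => ¬ i = σ i ∧ G.Adj i (σ i)).card := by
  unfold bivPermPoly permanent
  refine Finset.sum_congr rfl fun σ _ => ?_
  calc (∏ i, _) = ∏ i, (if i = σ i then (MvPolynomial.X 0 : MvPolynomial (Fin 2) ℤ)
        else if G.Adj i (σ i) then MvPolynomial.X 1 else 1) :=
        Finset.prod_congr rfl fun i _ => matrix_entry G i (σ i)
    _ = _ := by
      rw [← Finset.prod_filter_mul_prod_filter_not Finset.univ (fun i => i = σ i)]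
      congr 1
      · rw [Finset.prod_congr rfl (fun i hi => if_pos (Finset.mem_filter.mp hi).2),
          Finset.prod_const]
      · rw [← Finset.prod_filter_mul_prod_filter_not
            (Finset.univ.filter fun i => ¬ i = σ i) (fun i => G.Adj i (σ i))]
        have e1 : ∏ i ∈ (Finset.univ.filter fun i => ¬ i = σ i).filter
            (fun i => G.Adj i (σ i)), (if i = σ i then (MvPolynomial.X 0 : MvPolynomial (Fin 2) ℤ)
              else if G.Adj i (σ i) then MvPolynomial.X 1 else 1)
            = (MvPolynomial.X 1 : MvPolynomial (Fin 2) ℤ) ^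
              ((Finset.univ.filter fun i => ¬ i = σ i).filter (fun i => G.Adj i (σ i))).card := by
          rw [Finset.prod_congr rfl (fun i hi => ?_), Finset.prod_const]
          have h := Finset.mem_filter.mp hi
          have h2 := Finset.mem_filter.mp h.1
          rw [if_neg h2.2, if_pos h.2]
        have e2 : ∏ i ∈ (Finset.univ.filter fun i => ¬ i = σ i).filter
            (fun i => ¬ G.Adj i (σ i)), (if i = σ i then (MvPolynomial.X 0 : MvPolynomial (Fin 2) ℤ)
              else if G.Adj i (σ i) then MvPolynomial.X 1 else 1) = 1 := by
          rw [Finset.prod_congr rfl (fun i hi => ?_), Finset.prod_const_one]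
          have h := Finset.mem_filter.mp hi
          have h2 := Finset.mem_filter.mp h.1
          rw [if_neg h2.2, if_neg h.2]
        rw [e1, e2, mul_one, Finset.filter_filter]

/-! ### Concrete graphs -/

def gAdj (i j : Fin 9) : Bool :=
  ((i.val, j.val) ∈ [(0,3),(0,7),(0,8),(1,2),(1,3),(2,5),(2,7),(3,7),(4,5),(4,6),(5,7),(6,8)]) ||
  ((j.val, i.val) ∈ [(0,3),(0,7),(0,8),(1,2),(1,3),(2,5),(2,7),(3,7),(4,5),(4,6),(5,7),(6,8)])

def hAdj (i j : Fin 9) : Bool :=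
  ((i.val, j.val) ∈ [(0,2),(0,3),(1,5),(1,7),(1,8),(2,7),(3,4),(3,8),(4,6),(5,6),(5,8),(7,8)]) ||
  ((j.val, i.val) ∈ [(0,2),(0,3),(1,5),(1,7),(1,8),(2,7),(3,4),(3,8),(4,6),(5,6),(5,8),(7,8)])

lemma gSymm : ∀ i j : Fin 9, gAdj i j = gAdj j i := by decide
lemma hSymm : ∀ i j : Fin 9, hAdj i j = hAdj j i := by decide
lemma gIrr : ∀ i : Fin 9, gAdj i i = false := by decide
lemma hIrr : ∀ i : Fin 9, hAdj i i = false := by decide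

def Gg : SimpleGraph (Fin 9) where
  Adj i j := gAdj i j = true
  symm := ⟨fun i j h => show gAdj j i = true from gSymm i j ▸ h⟩
  loopless := ⟨fun i h => Bool.false_ne_true ((gIrr i) ▸ (h : gAdj i i = true))⟩

def Hg : SimpleGraph (Fin 9) where
  Adj i j := hAdj i j = true
  symm := ⟨fun i j h => show hAdj j i = true from hSymm i j ▸ h⟩
  loopless := ⟨fun i h => Bool.false_ne_true ((hIrr i) ▸ (h : hAdj i i = true))⟩

instance : DecidableRel Gg.Adj := fun i j => inferInstanceAs (Decidable (gAdj i j = true))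
instance : DecidableRel Hg.Adj := fun i j => inferInstanceAs (Decidable (hAdj i j = true))

/-! ### Codes and the base-B encoding -/

def Bn : ℕ := 1048576

def vB : Fin 2 → ℤ := fun i => if i = 0 then (Bn : ℤ) ^ 10 else (Bn : ℤ)

noncomputable def mon (c : ℕ) : MvPolynomial (Fin 2) ℤ :=
  (MvPolynomial.X 0 : MvPolynomial (Fin 2) ℤ) ^ (c / 10) *
  (MvPolynomial.X 1 : MvPolynomial (Fin 2) ℤ) ^ (c % 10)

lemma eval_mon (c : ℕ) : MvPolynomial.eval vB (mon c) = (Bn : ℤ) ^ c := by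
  have h0 : vB 0 = (Bn : ℤ) ^ 10 := by simp [vB]
  have h1 : vB 1 = (Bn : ℤ) := by
    have : (1 : Fin 2) ≠ 0 := by decide
    simp [vB, this]
  simp only [mon, map_mul, map_pow, MvPolynomial.eval_X, h0, h1]
  rw [← pow_mul, ← pow_add]
  congr 1
  omega

def cFix (σ : Equiv.Perm (Fin 9)) : ℕ := (Finset.univ.filter fun i => i = σ i).card

def cEdg (G : SimpleGraph (Fin 9)) [DecidableRel G.Adj] (σ : Equiv.Perm (Fin 9)) : ℕ :=
  (Finset.univ.filter fun i => ¬ i = σ i ∧ G.Adj i (σ i)).card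

def codeFn (G : SimpleGraph (Fin 9)) [DecidableRel G.Adj] (σ : Equiv.Perm (Fin 9)) : ℕ :=
  10 * cFix σ + cEdg G σ

lemma cFix_le (σ : Equiv.Perm (Fin 9)) : cFix σ ≤ 9 := by
  have := Finset.card_filter_le (Finset.univ : Finset (Fin 9)) (fun i => i = σ i)
  simpa [cFix] using this

lemma cEdg_le (G : SimpleGraph (Fin 9)) [DecidableRel G.Adj] (σ : Equiv.Perm (Fin 9)) :
    cEdg G σ ≤ 9 := by
  have := Finset.card_filter_le (Finset.univ : Finset (Fin 9))
    (fun i => ¬ i = σ i ∧ G.Adj i (σ i))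
  simpa [cEdg] using this

lemma code_lt (G : SimpleGraph (Fin 9)) [DecidableRel G.Adj] (σ : Equiv.Perm (Fin 9)) :
    codeFn G σ < 100 := by
  have h1 := cFix_le σ
  have h2 := cEdg_le G σ
  unfold codeFn
  omega

lemma biv_eq_mon (G : SimpleGraph (Fin 9)) [DecidableRel G.Adj] :
    bivPermPoly G = ∑ σ : Equiv.Perm (Fin 9), mon (codeFn G σ) := by
  rw [bivPermPoly_eq_sum G]
  refine Finset.sum_congr rfl fun σ _ => ?_
  have hmon : mon (codeFn G σ) = (MvPolynomial.X 0 : MvPolynomial (Fin 2) ℤ) ^ cFix σ *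
      (MvPolynomial.X 1 : MvPolynomial (Fin 2) ℤ) ^ cEdg G σ := by
    have hk : cEdg G σ ≤ 9 := cEdg_le G σ
    unfold mon codeFn
    congr 1
    · congr 1
      omega
    · congr 1
      omega
  rw [hmon]
  simp only [cFix, cEdg]
  congr!

lemma biv_eq_table (G : SimpleGraph (Fin 9)) [DecidableRel G.Adj] :
    bivPermPoly G
      = ∑ c ∈ Finset.range 100, (Finset.univ.filter fun σ => codeFn G σ = c).card • mon c :=
  (biv_eq_mon G).trans (sum_code (codeFn G) (code_lt G) mon)

/-! ### Integer evaluation -/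

def iMat (G : SimpleGraph (Fin 9)) [DecidableRel G.Adj] : Matrix (Fin 9) (Fin 9) ℤ :=
  fun i j => if i = j then (Bn : ℤ) ^ 10 else if G.Adj i j then (Bn : ℤ) else 1

lemma eval_biv (G : SimpleGraph (Fin 9)) [DecidableRel G.Adj] :
    MvPolynomial.eval vB (bivPermPoly G) = permanent (iMat G) := by
  unfold bivPermPoly
  rw [permanent_map (MvPolynomial.eval vB)]
  congr 1
  funext i j
  rw [matrix_entry G i j]
  by_cases hij : i = j
  · simp [iMat, hij, vB]
  · by_cases hadj : G.Adj i j
    · have h1 : (1 : Fin 2) ≠ 0 := by decide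
      simp [iMat, hij, hadj, vB, h1]
    · simp [iMat, hij, hadj]

lemma N_lt (code : Equiv.Perm (Fin 9) → ℕ) (c : ℕ) :
    (Finset.univ.filter fun σ => code σ = c).card < Bn := by
  have h1 := Finset.card_filter_le (Finset.univ : Finset (Equiv.Perm (Fin 9)))
    (fun σ => code σ = c)
  have h2 : (Finset.univ : Finset (Equiv.Perm (Fin 9))).card = 362880 := by
    rw [Finset.card_univ, Fintype.card_perm, Fintype.card_fin]
    decide
  rw [h2] at h1
  unfold Bn
  omega

set_option maxHeartbeats 4000000 in
set_option maxRecDepth 100000 in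
lemma ryser_eq :
    (∑ S : Finset (Fin 9), (-1 : ℤ) ^ (9 - S.card) * ∏ i, ∑ j ∈ S, iMat Gg i j)
      = ∑ S : Finset (Fin 9), (-1 : ℤ) ^ (9 - S.card) * ∏ i, ∑ j ∈ S, iMat Hg i j := by
  decide

/-! ### Non-isomorphism via the triangle invariant -/

def tri (A : Fin 9 → Fin 9 → Bool) (v : Fin 9) : Bool :=
  decide (∃ w x : Fin 9, A v w = true ∧ A v x = true ∧ A w x = true)

lemma noniso : ¬ Nonempty (Gg ≃g Hg) := by
  rintro ⟨e⟩
  have key2 : ∀ v, tri gAdj v = true ↔ tri hAdj (e v) = true := by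
    intro v
    simp only [tri, decide_eq_true_eq]
    constructor
    · rintro ⟨w, x, h1, h2, h3⟩
      exact ⟨e w, e x, e.map_adj_iff.mpr h1, e.map_adj_iff.mpr h2, e.map_adj_iff.mpr h3⟩
    · rintro ⟨w, x, h1, h2, h3⟩
      refine ⟨e.symm w, e.symm x, ?_, ?_, ?_⟩
      · have := e.symm.map_adj_iff.mpr (show Hg.Adj (e v) w from h1)
        exact (by simpa using this : Gg.Adj v (e.symm w))
      · have := e.symm.map_adj_iff.mpr (show Hg.Adj (e v) x from h2)
        exact (by simpa using this : Gg.Adj v (e.symm x))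
      · exact e.symm.map_adj_iff.mpr (show Hg.Adj w x from h3)
  have himg : (Finset.univ.filter fun v => tri gAdj v = true).image (fun v => e v)
      = Finset.univ.filter fun v => tri hAdj v = true := by
    ext b
    simp only [Finset.mem_image, Finset.mem_filter, Finset.mem_univ, true_and]
    constructor
    · rintro ⟨a, ha, rfl⟩
      exact (key2 a).mp ha
    · intro hb
      refine ⟨e.symm b, (key2 (e.symm b)).mpr ?_, by simp⟩
      simpa using hb
  have hcard : (Finset.univ.filter fun v => tri gAdj v = true).card
      = (Finset.univ.filter fun v => tri hAdj v = true).card := by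
    rw [← himg]
    exact (Finset.card_image_of_injective _ (fun a b h => e.injective h)).symm
  have h5 : (Finset.univ.filter fun v => tri gAdj v = true).card = 5 := by decide
  have h4 : (Finset.univ.filter fun v => tri hAdj v = true).card = 4 := by decide
  omega

/-! ### Main theorem -/

/-- There exist two non-isomorphic simple graphs on 9 vertices with the same
bivariate permanent polynomial. -/
theorem exists_copermanent_nonisomorphic_on_nine_vertices :
    ∃ G H : SimpleGraph (Fin 9),
      ¬ Nonempty (G ≃g H) ∧ bivPermPoly G = bivPermPoly H := by
  refine ⟨Gg, Hg, noniso, ?_⟩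
  -- integer evaluations agree
  have hint : MvPolynomial.eval vB (bivPermPoly Gg) = MvPolynomial.eval vB (bivPermPoly Hg) := by
    rw [eval_biv Gg, eval_biv Hg, permanent_ryser, permanent_ryser]
    exact ryser_eq
  -- turn both sides into base-B digit sums
  have htab : ∀ (G : SimpleGraph (Fin 9)) [DecidableRel G.Adj],
      MvPolynomial.eval vB (bivPermPoly G)
        = ((∑ c ∈ Finset.range 100,
            (Finset.univ.filter fun σ => codeFn G σ = c).card * Bn ^ c : ℕ) : ℤ) := by
    intro G inst
    rw [biv_eq_table G, map_sum, Nat.cast_sum]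
    refine Finset.sum_congr rfl fun c _ => ?_
    rw [map_nsmul, eval_mon, nsmul_eq_mul]
    push_cast
    ring
  rw [htab Gg, htab Hg] at hint
  have hnat := Nat.cast_inj.mp hint
  have hN : ∀ c, c < 100 →
      (Finset.univ.filter fun σ => codeFn Gg σ = c).card
        = (Finset.univ.filter fun σ => codeFn Hg σ = c).card := by
    refine digits_unique Bn (by unfold Bn; omega) 100 _ _ ?_ ?_ hnat
    · intro c _; exact N_lt (codeFn Gg) c
    · intro c _; exact N_lt (codeFn Hg) c
  rw [biv_eq_table Gg, biv_eq_table Hg]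
  refine Finset.sum_congr rfl fun c hc => ?_
  rw [hN c (Finset.mem_range.mp hc)]
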